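/- Let A=(S,R) be a finite argumentation network and let h be an assignment under which some atom has value (⊥,⊤). Then t ⊨_h Θ¹_A, where Θ¹_A is the theory Δ_A with every occurrence of the constant n replaced by the formula ⋀_{x∈S}(x ∨ ¬x), if and only if λ_h is a complete extension of A (necessarily a non-stable one, since some atom is labelled und). -/
import Mathlib


/-- The three Caminada labels. -/
inductive Label where
  | in_ : Label
  | out : Label
  | und : Label
deriving DecidableEq

/-- Propositional intuitionistic formulas over atoms `α`, with the
distinguished constant `nconst` (the paper's `n`). -/
inductive Form (α : Type) where
  | atom : α → Form α
  | nconst : Form α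
  | top : Form α
  | bot : Form α
  | and : Form α → Form α → Form α
  | or : Form α → Form α → Form α
  | imp : Form α → Form α → Form α
  | neg : Form α → Form α

/-- Forcing in the two-world Kripke model: world `false` is `t`, world `true`
is `s`, with `t < s` (i.e. the Bool order). `h` assigns to each atom its pair
of truth values (at `t`, at `s`). The constant `n` has value `(⊥,⊤)`. -/
def force {α : Type} (h : α → Bool × Bool) : Bool → Form α → Prop
  | w, .atom x => (if w then (h x).2 else (h x).1) = true
  | w, .nconst => w = true
  | _, .top => True
  | _, .bot => False
  | w, .and A B => force h w A ∧ force h w B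
  | w, .or A B => force h w A ∨ force h w B
  | w, .imp A B => ∀ v : Bool, w ≤ v → force h v A → force h v B
  | w, .neg A => ∀ v : Bool, w ≤ v → ¬ force h v A

/-- An assignment is legitimate when no atom gets the forbidden value `(⊤,⊥)`. -/
def Persistent {α : Type} (h : α → Bool × Bool) : Prop :=
  ∀ x, (h x).1 = true → (h x).2 = true

def bigAnd {α : Type} : List (Form α) → Form α
  | [] => .top
  | f :: fs => .and f (bigAnd fs)

def bigOr {α : Type} : List (Form α) → Form α
  | [] => .bot
  | f :: fs => .or f (bigOr fs)

/-- The list of attackers of `x` in the network `(α, R)`. -/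
noncomputable def attackers {α : Type} [Fintype α] (R : α → α → Prop) [DecidableRel R] (x : α) : List α :=
  (Finset.univ.filter (fun y => R y x)).toList

/-- (a1)  `x → (n ∨ ⋀_{yRx} ¬y)` -/
noncomputable def fa1 {α : Type} [Fintype α] (R : α → α → Prop) [DecidableRel R] (x : α) : Form α :=
  .imp (.atom x) (.or .nconst (bigAnd ((attackers R x).map (fun y => .neg (.atom y)))))

/-- (a2)  `(⋀_{yRx} ¬y) → (n ∨ x)` -/
noncomputable def fa2 {α : Type} [Fintype α] (R : α → α → Prop) [DecidableRel R] (x : α) : Form α :=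
  .imp (bigAnd ((attackers R x).map (fun y => .neg (.atom y)))) (.or .nconst (.atom x))

/-- (b1)  `¬x → (n ∨ ⋁_{yRx} y)` -/
noncomputable def fb1 {α : Type} [Fintype α] (R : α → α → Prop) [DecidableRel R] (x : α) : Form α :=
  .imp (.neg (.atom x)) (.or .nconst (bigOr ((attackers R x).map (fun y => .atom y))))

/-- (b2)  `(⋁_{yRx} y) → (¬x ∨ n)` -/
noncomputable def fb2 {α : Type} [Fintype α] (R : α → α → Prop) [DecidableRel R] (x : α) : Form α :=
  .imp (bigOr ((attackers R x).map (fun y => .atom y))) (.or (.neg (.atom x)) .nconst)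

/-- `h` is a model of the theory `Δ_A`: every formula of `Δ_A` holds at `t`. -/
def ModelsDelta {α : Type} [Fintype α] (h : α → Bool × Bool)
    (R : α → α → Prop) [DecidableRel R] : Prop :=
  ∀ x, force h false (fa1 R x) ∧ force h false (fa2 R x) ∧
    force h false (fb1 R x) ∧ force h false (fb2 R x)

/-- Caminada labelling / complete extension of the network `(α, R)`. -/
def IsCompleteExt {α : Type} (R : α → α → Prop) (l : α → Label) : Prop :=
  (∀ x, l x = .in_ ↔ ∀ y, R y x → l y = .out) ∧
  (∀ x, l x = .out ↔ ∃ y, R y x ∧ l y = .in_) ∧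
  (∀ x, l x = .und ↔ ((∀ y, R y x → l y ≠ .in_) ∧ ∃ y, R y x ∧ l y = .und))

/-- The labelling `λ_h` induced by an assignment `h`. -/
def lamOf {α : Type} (h : α → Bool × Bool) (x : α) : Label :=
  if h x = (true, true) then .in_ else if h x = (false, false) then .out else .und

/-- The assignment `h_λ` induced by a labelling `λ`. -/
def assignOf {α : Type} (l : α → Label) (x : α) : Bool × Bool :=
  match l x with
  | .in_ => (true, true)
  | .out => (false, false)
  | .und => (false, true)

/-- Substitute the formula `N` for every occurrence of the constant `n`. -/
def subN {α : Type} (N : Form α) : Form α → Form α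
  | .atom x => .atom x
  | .nconst => N
  | .top => .top
  | .bot => .bot
  | .and A B => .and (subN N A) (subN N B)
  | .or A B => .or (subN N A) (subN N B)
  | .imp A B => .imp (subN N A) (subN N B)
  | .neg A => .neg (subN N A)

/-- The formula `N = ⋀_{x∈S} (x ∨ ¬x)`. -/
noncomputable def Nform (α : Type) [Fintype α] : Form α :=
  bigAnd ((Finset.univ : Finset α).toList.map (fun x => .or (.atom x) (.neg (.atom x))))

section Aux
variable {α : Type}

lemma force_neg_false (h : α → Bool × Bool) (A : Form α) :
    force h false (.neg A) ↔ ¬ force h false A ∧ ¬ force h true A := by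
  constructor
  · intro H; exact ⟨H false (by decide), H true (by decide)⟩
  · rintro ⟨h1, h2⟩ v _
    cases v
    · exact h1
    · exact h2

lemma force_neg_true (h : α → Bool × Bool) (A : Form α) :
    force h true (.neg A) ↔ ¬ force h true A := by
  constructor
  · intro H; exact H true (le_refl _)
  · intro h2 v hv
    cases v
    · exact absurd hv (by decide)
    · exact h2

lemma force_imp_false (h : α → Bool × Bool) (A B : Form α) :
    force h false (.imp A B) ↔
      (force h false A → force h false B) ∧ (force h true A → force h true B) := by
  constructor
  · intro H; exact ⟨H false (by decide), H true (by decide)⟩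
  · rintro ⟨h1, h2⟩ v _
    cases v
    · exact h1
    · exact h2

lemma force_bigAnd (h : α → Bool × Bool) (w : Bool) (L : List (Form α)) :
    force h w (bigAnd L) ↔ ∀ f ∈ L, force h w f := by
  induction L with
  | nil => simp [bigAnd, force]
  | cons f fs ih => simp [bigAnd, force, ih]

lemma force_bigOr (h : α → Bool × Bool) (w : Bool) (L : List (Form α)) :
    force h w (bigOr L) ↔ ∃ f ∈ L, force h w f := by
  induction L with
  | nil => simp [bigOr, force]
  | cons f fs ih => simp [bigOr, force, ih]

lemma mem_attackers [Fintype α] (R : α → α → Prop) [DecidableRel R] (x y : α) :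
    y ∈ attackers R x ↔ R y x := by
  simp [attackers]

lemma tri (h : α → Bool × Bool) (hp : Persistent h) (x : α) :
    h x = (true, true) ∨ h x = (false, true) ∨ h x = (false, false) := by
  have hpx := hp x
  rcases hxe : h x with ⟨a, b⟩
  cases a <;> cases b <;> simp_all

lemma atomF (h : α → Bool × Bool) (hp : Persistent h) (x : α) :
    force h false (.atom x) ↔ lamOf h x = .in_ := by
  rcases tri h hp x with hx | hx | hx <;> simp [force, lamOf, hx]

lemma atomT (h : α → Bool × Bool) (hp : Persistent h) (x : α) :
    force h true (.atom x) ↔ lamOf h x ≠ .out := by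
  rcases tri h hp x with hx | hx | hx <;> simp [force, lamOf, hx]

lemma negF (h : α → Bool × Bool) (hp : Persistent h) (x : α) :
    force h false (.neg (.atom x)) ↔ lamOf h x = .out := by
  rw [force_neg_false]
  rcases tri h hp x with hx | hx | hx <;> simp [force, lamOf, hx]

end Aux

section Aux2
variable {α : Type}

lemma force_Nform (h : α → Bool × Bool) [Fintype α] (hp : Persistent h)
    (hu : ∃ x, h x = (false, true)) (w : Bool) :
    force h w (Nform α) ↔ w = true := by
  constructor
  · intro H
    obtain ⟨x, hx⟩ := hu
    cases w
    · exfalso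
      rw [Nform, force_bigAnd] at H
      have := H (.or (.atom x) (.neg (.atom x)))
        (by simp only [List.mem_map]; exact ⟨x, by simp, rfl⟩)
      rcases this with h1 | h1
      · simp [force, hx] at h1
      · exact (force_neg_false h _).1 h1 |>.2 (by simp [force, hx])
    · rfl
  · rintro rfl
    rw [Nform, force_bigAnd]
    intro f hf
    simp only [List.mem_map] at hf
    obtain ⟨y, -, rfl⟩ := hf
    by_cases hy : force h true (.atom y)
    · exact Or.inl hy
    · exact Or.inr ((force_neg_true h _).2 hy)

lemma force_subN (h : α → Bool × Bool) (N : Form α)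
    (hN : ∀ w, force h w N ↔ w = true) :
    ∀ (A : Form α) (w : Bool), force h w (subN N A) ↔ force h w A := by
  intro A
  induction A with
  | atom x => intro w; exact Iff.rfl
  | nconst => intro w; simpa [subN, force] using hN w
  | top => intro w; exact Iff.rfl
  | bot => intro w; exact Iff.rfl
  | and A B ihA ihB => intro w; simp [subN, force, ihA, ihB]
  | or A B ihA ihB => intro w; simp [subN, force, ihA, ihB]
  | imp A B ihA ihB =>
      intro w
      constructor
      · intro H v hv hA; exact (ihB v).1 (H v hv ((ihA v).2 hA))
      · intro H v hv hA; exact (ihB v).2 (H v hv ((ihA v).1 hA))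
  | neg A ihA =>
      intro w
      constructor
      · intro H v hv hA; exact H v hv ((ihA v).2 hA)
      · intro H v hv hA; exact H v hv ((ihA v).1 hA)

end Aux2

section Aux3
variable {α : Type} [Fintype α] (R : α → α → Prop) [DecidableRel R]
variable (h : α → Bool × Bool)

lemma fa1_iff (hp : Persistent h) (x : α) :
    force h false (fa1 R x) ↔
      (lamOf h x = .in_ → ∀ y, R y x → lamOf h y = .out) := by
  rw [fa1, force_imp_false]
  constructor
  · intro H hin y hy
    rcases H.1 ((atomF h hp x).2 hin) with hn | hA
    · simp [force] at hn
    · have := (force_bigAnd h false _).1 hA (.neg (.atom y))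
        (List.mem_map.2 ⟨y, (mem_attackers R x y).2 hy, rfl⟩)
      exact (negF h hp y).1 this
  · intro H
    refine ⟨fun hfx => ?_, fun _ => Or.inl rfl⟩
    refine Or.inr ((force_bigAnd h false _).2 ?_)
    intro f hf
    simp only [List.mem_map] at hf
    obtain ⟨y, hy, rfl⟩ := hf
    exact (negF h hp y).2 (H ((atomF h hp x).1 hfx) y ((mem_attackers R x y).1 hy))

lemma fa2_iff (hp : Persistent h) (x : α) :
    force h false (fa2 R x) ↔
      ((∀ y, R y x → lamOf h y = .out) → lamOf h x = .in_) := by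
  rw [fa2, force_imp_false]
  constructor
  · intro H hall
    have hA : force h false (bigAnd ((attackers R x).map fun y => .neg (.atom y))) := by
      refine (force_bigAnd h false _).2 ?_
      intro f hf
      simp only [List.mem_map] at hf
      obtain ⟨y, hy, rfl⟩ := hf
      exact (negF h hp y).2 (hall y ((mem_attackers R x y).1 hy))
    rcases H.1 hA with hn | hx
    · simp [force] at hn
    · exact (atomF h hp x).1 hx
  · intro H
    refine ⟨fun hA => ?_, fun _ => Or.inl rfl⟩
    refine Or.inr ((atomF h hp x).2 (H fun y hy => (negF h hp y).1
      ((force_bigAnd h false _).1 hA (.neg (.atom y))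
        (List.mem_map.2 ⟨y, (mem_attackers R x y).2 hy, rfl⟩))))

lemma fb1_iff (hp : Persistent h) (x : α) :
    force h false (fb1 R x) ↔
      (lamOf h x = .out → ∃ y, R y x ∧ lamOf h y = .in_) := by
  rw [fb1, force_imp_false]
  constructor
  · intro H hout
    rcases H.1 ((negF h hp x).2 hout) with hn | hO
    · simp [force] at hn
    · obtain ⟨f, hf, hff⟩ := (force_bigOr h false _).1 hO
      simp only [List.mem_map] at hf
      obtain ⟨y, hy, rfl⟩ := hf
      exact ⟨y, (mem_attackers R x y).1 hy, (atomF h hp y).1 hff⟩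
  · intro H
    refine ⟨fun hneg => ?_, fun _ => Or.inl rfl⟩
    obtain ⟨y, hy, hin⟩ := H ((negF h hp x).1 hneg)
    refine Or.inr ((force_bigOr h false _).2
      ⟨.atom y, List.mem_map.2 ⟨y, (mem_attackers R x y).2 hy, rfl⟩, (atomF h hp y).2 hin⟩)

lemma fb2_iff (hp : Persistent h) (x : α) :
    force h false (fb2 R x) ↔
      ((∃ y, R y x ∧ lamOf h y = .in_) → lamOf h x = .out) := by
  rw [fb2, force_imp_false]
  constructor
  · rintro H ⟨y, hy, hin⟩
    have hO : force h false (bigOr ((attackers R x).map fun y => Form.atom y)) :=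
      (force_bigOr h false _).2
        ⟨.atom y, List.mem_map.2 ⟨y, (mem_attackers R x y).2 hy, rfl⟩, (atomF h hp y).2 hin⟩
    rcases H.1 hO with hneg | hn
    · exact (negF h hp x).1 hneg
    · simp [force] at hn
  · intro H
    refine ⟨fun hO => ?_, fun _ => Or.inr rfl⟩
    obtain ⟨f, hf, hff⟩ := (force_bigOr h false _).1 hO
    simp only [List.mem_map] at hf
    obtain ⟨y, hy, rfl⟩ := hf
    exact Or.inl ((negF h hp x).2
      (H ⟨y, (mem_attackers R x y).1 hy, (atomF h hp y).1 hff⟩))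

end Aux3

/-- If some atom has value `(⊥,⊤)` under `h`, then `t ⊨_h Θ¹_A` (which is `Δ_A`
with `n` replaced by `⋀_{x∈S}(x ∨ ¬x)`) iff `λ_h` is a complete extension of `A`
(and it is non-stable: some atom is labelled `und`). -/

theorem stmt9 {α : Type} [Fintype α] [Nonempty α] (R : α → α → Prop) [DecidableRel R]
    (h : α → Bool × Bool) (hp : Persistent h) (hu : ∃ x, h x = (false, true)) :
    ((∀ x, force h false (subN (Nform α) (fa1 R x)) ∧
        force h false (subN (Nform α) (fa2 R x)) ∧
        force h false (subN (Nform α) (fb1 R x)) ∧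
        force h false (subN (Nform α) (fb2 R x))) ↔
      IsCompleteExt R (lamOf h)) ∧
    (∃ x, lamOf h x = .und) := by
  obtain ⟨x0, hx0⟩ := hu
  refine ⟨?_, ⟨x0, by simp [lamOf, hx0]⟩⟩
  have key : ∀ (A : Form α) (w : Bool), force h w (subN (Nform α) A) ↔ force h w A :=
    force_subN h _ (force_Nform h hp ⟨x0, hx0⟩)
  constructor
  · intro H
    have C1 : ∀ x, lamOf h x = .in_ ↔ (∀ y, R y x → lamOf h y = .out) := fun x =>
      ⟨(fa1_iff R h hp x).1 ((key _ _).1 (H x).1),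
       (fa2_iff R h hp x).1 ((key _ _).1 (H x).2.1)⟩
    have C2 : ∀ x, lamOf h x = .out ↔ ∃ y, R y x ∧ lamOf h y = .in_ := fun x =>
      ⟨(fb1_iff R h hp x).1 ((key _ _).1 (H x).2.2.1),
       (fb2_iff R h hp x).1 ((key _ _).1 (H x).2.2.2)⟩
    refine ⟨C1, C2, ?_⟩
    intro x
    constructor
    · intro hund
      have hnin : lamOf h x ≠ .in_ := by simp [hund]
      have hnout : lamOf h x ≠ .out := by simp [hund]
      have h1 : ∀ y, R y x → lamOf h y ≠ .in_ := fun y hy hin => hnout ((C2 x).2 ⟨y, hy, hin⟩)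
      have h2 : ¬ ∀ y, R y x → lamOf h y = .out := fun hall => hnin ((C1 x).2 hall)
      push_neg at h2
      obtain ⟨y, hy, hyo⟩ := h2
      refine ⟨h1, y, hy, ?_⟩
      cases hl : lamOf h y with
      | in_ => exact absurd hl (h1 y hy)
      | out => exact absurd hl hyo
      | und => rfl
    · rintro ⟨h1, y, hy, hund⟩
      cases hl : lamOf h x with
      | in_ =>
          exfalso
          have := (C1 x).1 hl y hy
          rw [this] at hund
          exact Label.noConfusion hund
      | out =>
          exfalso
          obtain ⟨z, hz, hzin⟩ := (C2 x).1 hl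
          exact h1 z hz hzin
      | und => rfl
  · intro HC x
    obtain ⟨C1, C2, _⟩ := HC
    exact ⟨(key _ _).2 ((fa1_iff R h hp x).2 fun hin => (C1 x).1 hin),
           (key _ _).2 ((fa2_iff R h hp x).2 fun hall => (C1 x).2 hall),
           (key _ _).2 ((fb1_iff R h hp x).2 fun hout => (C2 x).1 hout),
           (key _ _).2 ((fb2_iff R h hp x).2 fun hex => (C2 x).2 hex)⟩
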